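/- Fix real parameters s, c₃ and c ≥ 0 with |s| < 1 and |c₃| < 1, set r = 0, and assume H₊(z) ≤ 1+sz and H₋(z) ≤ 1−sz for all z ∈ [0,1]. If c₃² ≥ c², then F(z) ≤ F(1) for all z ∈ [0,1], and with C = |c₃| one has F(1) = (1/4)(1+s+C)log₂((1+s+C)/(1+s)) + (1/4)(1+s−C)log₂((1+s−C)/(1+s)) + (1/4)(1−s+C)log₂((1−s+C)/(1−s)) + (1/4)(1−s−C)log₂((1−s−C)/(1−s)). -/

import Mathlib

/-- `H₊(z) = √(c²(1−z²)+(r+c₃z)²)`. -/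
noncomputable def Hp (r c₃ c z : ℝ) : ℝ := Real.sqrt (c^2*(1 - z^2) + (r + c₃*z)^2)

/-- `H₋(z) = √(c²(1−z²)+(r−c₃z)²)`. -/
noncomputable def Hm (r c₃ c z : ℝ) : ℝ := Real.sqrt (c^2*(1 - z^2) + (r - c₃*z)^2)

/-- The one-variable function `F(z)` from the quantum discord of X-states. -/
noncomputable def F (r s c₃ c z : ℝ) : ℝ :=
  (1/4) * (1 + s*z + Hp r c₃ c z) * Real.logb 2 ((1 + s*z + Hp r c₃ c z) / (1 + s*z)) +
  (1/4) * (1 + s*z - Hp r c₃ c z) * Real.logb 2 ((1 + s*z - Hp r c₃ c z) / (1 + s*z)) +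
  (1/4) * (1 - s*z + Hm r c₃ c z) * Real.logb 2 ((1 - s*z + Hm r c₃ c z) / (1 - s*z)) +
  (1/4) * (1 - s*z - Hm r c₃ c z) * Real.logb 2 ((1 - s*z - Hm r c₃ c z) / (1 - s*z))

section Aux
open Real Set

/-- `L(x) = x log x`. -/
noncomputable def L (x : ℝ) : ℝ := x * Real.log x

/-- `G(a,h) = L(a+h) + L(a-h) - 2 L(a)`. -/
noncomputable def G (a h : ℝ) : ℝ := L (a + h) + L (a - h) - 2 * L a

lemma continuous_L : Continuous L := Real.continuous_mul_log

lemma hasDerivAt_L {x : ℝ} (hx : x ≠ 0) : HasDerivAt L (Real.log x + 1) x :=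
  Real.hasDerivAt_mul_log hx

lemma mul_log_div {x a : ℝ} (hx : 0 ≤ x) (ha : 0 < a) :
    x * Real.log (x / a) = x * Real.log x - x * Real.log a := by
  rcases hx.eq_or_lt with h | h
  · simp [← h]
  · rw [Real.log_div h.ne' ha.ne']; ring

lemma G_mono_h {a : ℝ} (ha : 0 < a) : MonotoneOn (fun h => G a h) (Icc 0 a) := by
  have key : ∀ x ∈ interior (Icc (0:ℝ) a), HasDerivAt (fun h => G a h)
      (Real.log (a + x) - Real.log (a - x)) x := by
    intro x hx
    rw [interior_Icc] at hx
    have h1 : (0:ℝ) < a + x := by linarith [hx.1]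
    have h2 : (0:ℝ) < a - x := by linarith [hx.2]
    have d1 : HasDerivAt (fun h : ℝ => L (a + h)) ((Real.log (a + x) + 1) * 1) x := by
      have := (hasDerivAt_L h1.ne').comp x ((hasDerivAt_id x).const_add a)
      simpa [Function.comp_def] using this
    have d2 : HasDerivAt (fun h : ℝ => L (a - h)) ((Real.log (a - x) + 1) * (-1)) x := by
      have := (hasDerivAt_L h2.ne').comp x ((hasDerivAt_id x).const_sub a)
      simpa [Function.comp_def] using this
    have := (d1.add d2).sub_const (2 * L a)
    have e : (Real.log (a + x) + 1) * 1 + (Real.log (a - x) + 1) * (-1)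
        = Real.log (a + x) - Real.log (a - x) := by ring
    rw [e] at this
    exact this.congr_deriv rfl
  apply monotoneOn_of_deriv_nonneg (convex_Icc 0 a)
  · apply Continuous.continuousOn
    exact ((continuous_L.comp (continuous_const.add continuous_id)).add
      (continuous_L.comp (continuous_const.sub continuous_id))).sub continuous_const
  · intro x hx
    exact (key x hx).differentiableAt.differentiableWithinAt
  · intro x hx
    rw [(key x hx).deriv]
    rw [interior_Icc] at hx
    have h2 : (0:ℝ) < a - x := by linarith [hx.2]
    have h3 : a - x ≤ a + x := by linarith [hx.1]
    have := Real.log_le_log h2 h3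
    linarith

lemma psi_mono {C : ℝ} (hC : 0 ≤ C) :
    MonotoneOn (fun u => G (1 + u) C + G (1 - u) C) (Icc 0 (1 - C)) := by
  have key : ∀ x ∈ interior (Icc (0:ℝ) (1 - C)),
      HasDerivAt (fun u => G (1 + u) C + G (1 - u) C)
        ((Real.log (1 + x + C) + Real.log (1 + x - C) + 2 * Real.log (1 - x))
          - (Real.log (1 - x + C) + Real.log (1 - x - C) + 2 * Real.log (1 + x))) x := by
    intro x hx
    rw [interior_Icc] at hx
    obtain ⟨hx0, hx1⟩ := hx
    have p1 : (0:ℝ) < 1 + x + C := by linarith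
    have p2 : (0:ℝ) < 1 + x - C := by linarith
    have p3 : (0:ℝ) < 1 + x := by linarith
    have p4 : (0:ℝ) < 1 - x + C := by linarith
    have p5 : (0:ℝ) < 1 - x - C := by linarith
    have p6 : (0:ℝ) < 1 - x := by linarith
    have i1 : HasDerivAt (fun u : ℝ => 1 + u + C) 1 x := by
      simpa using ((hasDerivAt_id x).const_add 1).add_const C
    have i2 : HasDerivAt (fun u : ℝ => 1 + u - C) 1 x := by
      simpa using ((hasDerivAt_id x).const_add 1).sub_const C
    have i3 : HasDerivAt (fun u : ℝ => 1 + u) 1 x := (hasDerivAt_id x).const_add 1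
    have i4 : HasDerivAt (fun u : ℝ => 1 - u + C) (-1) x := by
      simpa using ((hasDerivAt_id x).const_sub 1).add_const C
    have i5 : HasDerivAt (fun u : ℝ => 1 - u - C) (-1) x := by
      simpa using ((hasDerivAt_id x).const_sub 1).sub_const C
    have i6 : HasDerivAt (fun u : ℝ => 1 - u) (-1) x := (hasDerivAt_id x).const_sub 1
    have t1 : HasDerivAt (fun u : ℝ => L (1 + u + C)) ((Real.log (1 + x + C) + 1) * 1) x := by
      simpa [Function.comp_def] using (hasDerivAt_L p1.ne').comp x i1
    have t2 : HasDerivAt (fun u : ℝ => L (1 + u - C)) ((Real.log (1 + x - C) + 1) * 1) x := by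
      simpa [Function.comp_def] using (hasDerivAt_L p2.ne').comp x i2
    have t3 : HasDerivAt (fun u : ℝ => L (1 + u)) ((Real.log (1 + x) + 1) * 1) x := by
      simpa [Function.comp_def] using (hasDerivAt_L p3.ne').comp x i3
    have t4 : HasDerivAt (fun u : ℝ => L (1 - u + C)) ((Real.log (1 - x + C) + 1) * (-1)) x := by
      simpa [Function.comp_def] using (hasDerivAt_L p4.ne').comp x i4
    have t5 : HasDerivAt (fun u : ℝ => L (1 - u - C)) ((Real.log (1 - x - C) + 1) * (-1)) x := by
      simpa [Function.comp_def] using (hasDerivAt_L p5.ne').comp x i5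
    have t6 : HasDerivAt (fun u : ℝ => L (1 - u)) ((Real.log (1 - x) + 1) * (-1)) x := by
      simpa [Function.comp_def] using (hasDerivAt_L p6.ne').comp x i6
    have total := ((t1.add t2).sub (t3.const_mul 2)).add ((t4.add t5).sub (t6.const_mul 2))
    have : (fun u : ℝ => G (1 + u) C + G (1 - u) C)
        = fun u : ℝ => (L (1 + u + C) + L (1 + u - C) - 2 * L (1 + u))
          + (L (1 - u + C) + L (1 - u - C) - 2 * L (1 - u)) := by
      funext u; simp [G]
    rw [this]
    refine total.congr_deriv ?_
    ring
  apply monotoneOn_of_deriv_nonneg (convex_Icc 0 (1 - C))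
  · apply Continuous.continuousOn
    simp only [G]
    have c1 : Continuous (fun u : ℝ => 1 + u + C) := by continuity
    have c2 : Continuous (fun u : ℝ => 1 + u - C) := by continuity
    have c3 : Continuous (fun u : ℝ => 1 + u) := by continuity
    have c4 : Continuous (fun u : ℝ => 1 - u + C) := by continuity
    have c5 : Continuous (fun u : ℝ => 1 - u - C) := by continuity
    have c6 : Continuous (fun u : ℝ => 1 - u) := by continuity
    exact (((continuous_L.comp c1).add (continuous_L.comp c2)).sub
        (continuous_const.mul (continuous_L.comp c3))).add
      (((continuous_L.comp c4).add (continuous_L.comp c5)).sub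
        (continuous_const.mul (continuous_L.comp c6)))
  · intro x hx
    exact (key x hx).differentiableAt.differentiableWithinAt
  · intro x hx
    rw [(key x hx).deriv]
    rw [interior_Icc] at hx
    obtain ⟨hx0, hx1⟩ := hx
    have p1 : (0:ℝ) < 1 + x + C := by linarith
    have p2 : (0:ℝ) < 1 + x - C := by linarith
    have p3 : (0:ℝ) < 1 + x := by linarith
    have p4 : (0:ℝ) < 1 - x + C := by linarith
    have p5 : (0:ℝ) < 1 - x - C := by linarith
    have p6 : (0:ℝ) < 1 - x := by linarith
    have expand : ∀ a b d : ℝ, 0 < a → 0 < b → 0 < d →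
        Real.log (a * (b * (d * d))) = Real.log a + Real.log b + 2 * Real.log d := by
      intro a b d ha hb hd
      rw [Real.log_mul ha.ne' (by positivity), Real.log_mul hb.ne' (by positivity),
        Real.log_mul hd.ne' hd.ne']
      ring
    have hprod : (1 - x + C) * ((1 - x - C) * ((1 + x) * (1 + x)))
        ≤ (1 + x + C) * ((1 + x - C) * ((1 - x) * (1 - x))) := by
      nlinarith [mul_nonneg (sq_nonneg C) hx0.le]
    have := Real.log_le_log (by positivity) hprod
    rw [expand _ _ _ p4 p5 p3, expand _ _ _ p1 p2 p6] at this
    linarith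

lemma Hm_eq_Hp (c₃ c z : ℝ) : Hm 0 c₃ c z = Hp 0 c₃ c z := by
  unfold Hm Hp
  ring_nf

lemma F_eq_G (s c₃ c z : ℝ) (h1 : 0 < 1 + s*z) (h2 : 0 < 1 - s*z)
    (hp : Hp 0 c₃ c z ≤ 1 + s*z) (hm : Hp 0 c₃ c z ≤ 1 - s*z) :
    F 0 s c₃ c z = (G (1 + s*z) (Hp 0 c₃ c z) + G (1 - s*z) (Hp 0 c₃ c z)) / (4 * Real.log 2) := by
  have hh : 0 ≤ Hp 0 c₃ c z := Real.sqrt_nonneg _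
  have e1 := mul_log_div (x := 1 + s*z + Hp 0 c₃ c z) (a := 1 + s*z) (by linarith) h1
  have e2 := mul_log_div (x := 1 + s*z - Hp 0 c₃ c z) (a := 1 + s*z) (by linarith) h1
  have e3 := mul_log_div (x := 1 - s*z + Hp 0 c₃ c z) (a := 1 - s*z) (by linarith) h2
  have e4 := mul_log_div (x := 1 - s*z - Hp 0 c₃ c z) (a := 1 - s*z) (by linarith) h2
  unfold F G L
  rw [Hm_eq_Hp]
  simp only [Real.logb]
  have hl2 : Real.log 2 ≠ 0 := by
    have := Real.log_pos (by norm_num : (1:ℝ) < 2); linarith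
  linear_combination (e1 + e2 + e3 + e4) / (4 * Real.log 2)

end Aux

open Real Set in
theorem F_max_at_one_case_c (s c₃ c : ℝ) (hc : 0 ≤ c) (hs : |s| < 1) (hc₃ : |c₃| < 1)
    (hHp : ∀ z ∈ Set.Icc (0:ℝ) 1, Hp 0 c₃ c z ≤ 1 + s*z)
    (hHm : ∀ z ∈ Set.Icc (0:ℝ) 1, Hm 0 c₃ c z ≤ 1 - s*z)
    (hcc : c^2 ≤ c₃^2) :
    (∀ z ∈ Set.Icc (0:ℝ) 1, F 0 s c₃ c z ≤ F 0 s c₃ c 1) ∧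
    F 0 s c₃ c 1 =
      (1/4) * (1 + s + |c₃|) * Real.logb 2 ((1 + s + |c₃|) / (1 + s)) +
      (1/4) * (1 + s - |c₃|) * Real.logb 2 ((1 + s - |c₃|) / (1 + s)) +
      (1/4) * (1 - s + |c₃|) * Real.logb 2 ((1 - s + |c₃|) / (1 - s)) +
      (1/4) * (1 - s - |c₃|) * Real.logb 2 ((1 - s - |c₃|) / (1 - s)) := by
  have l2 : (0:ℝ) < Real.log 2 := Real.log_pos (by norm_num)
  have habs := abs_lt.1 hs
  have hC0 : (0:ℝ) ≤ |c₃| := abs_nonneg _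
  have hHp1 : Hp 0 c₃ c 1 = |c₃| := by
    unfold Hp
    rw [show c^2*(1-1^2) + (0 + c₃*1)^2 = c₃^2 by ring, Real.sqrt_sq_eq_abs]
  -- |c₃| ≤ 1 - |s|
  have hC1 : |c₃| ≤ 1 - |s| := by
    have h1 := hHp 1 (by norm_num)
    have h2 := hHm 1 (by norm_num)
    rw [Hm_eq_Hp, hHp1] at h2
    rw [hHp1] at h1
    rcases abs_cases s with ⟨h, _⟩ | ⟨h, _⟩ <;> linarith
  constructor
  · intro z hz
    obtain ⟨hz0, hz1⟩ := hz
    have hsz : |s| * z ≤ |s| := mul_le_of_le_one_right (abs_nonneg s) hz1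
    have hszb : |s * z| ≤ |s| := by
      rw [abs_mul, abs_of_nonneg hz0]; exact hsz
    have hszlt := abs_le.1 hszb
    have h1 : 0 < 1 + s * z := by linarith
    have h2 : 0 < 1 - s * z := by linarith
    have hle_p := hHp z ⟨hz0, hz1⟩
    have hle_m := hHm z ⟨hz0, hz1⟩
    rw [Hm_eq_Hp] at hle_m
    have hh0 : 0 ≤ Hp 0 c₃ c z := Real.sqrt_nonneg _
    have hhC : Hp 0 c₃ c z ≤ |c₃| := by
      unfold Hp
      rw [← Real.sqrt_sq_eq_abs]
      apply Real.sqrt_le_sqrt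
      nlinarith [mul_nonneg (sub_nonneg.2 hcc) (by nlinarith : (0:ℝ) ≤ 1 - z^2)]
    have h1' : (0:ℝ) < 1 + s * 1 := by linarith
    have h2' : (0:ℝ) < 1 - s * 1 := by linarith
    rw [F_eq_G s c₃ c z h1 h2 hle_p hle_m,
      F_eq_G s c₃ c 1 h1' h2' (hHp 1 (by norm_num)) (by rw [← Hm_eq_Hp]; exact hHm 1 (by norm_num)),
      hHp1]
    have step1 : G (1 + s * z) (Hp 0 c₃ c z) ≤ G (1 + s * z) |c₃| :=
      G_mono_h h1 ⟨hh0, hle_p⟩ ⟨hC0, by linarith⟩ hhC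
    have step2 : G (1 - s * z) (Hp 0 c₃ c z) ≤ G (1 - s * z) |c₃| :=
      G_mono_h h2 ⟨hh0, hle_m⟩ ⟨hC0, by linarith⟩ hhC
    have hmono := psi_mono hC0
    have step3 : G (1 + s * z) |c₃| + G (1 - s * z) |c₃|
        ≤ G (1 + s * 1) |c₃| + G (1 - s * 1) |c₃| := by
      rcases le_or_gt 0 s with hs0 | hs0
      · have hsz0 : 0 ≤ s * z := mul_nonneg hs0 hz0
        have hs' : |s| = s := abs_of_nonneg hs0
        have := hmono (a := s * z) (b := s)
          ⟨hsz0, by rw [hs'] at hC1 hszlt; linarith⟩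
          ⟨hs0, by rw [hs'] at hC1; linarith⟩
          (by rw [hs'] at hszlt; linarith)
        simpa [mul_one] using this
      · have hs' : |s| = -s := abs_of_neg hs0
        have := hmono (a := -(s * z)) (b := -s)
          ⟨by nlinarith, by rw [hs'] at hC1 hszlt; linarith⟩
          ⟨by linarith, by rw [hs'] at hC1; linarith⟩
          (by rw [hs'] at hszlt; linarith)
        simp only [show (1:ℝ) + -(s * z) = 1 - s * z by ring,
          show (1:ℝ) - -(s * z) = 1 + s * z by ring,
          show (1:ℝ) + -s = 1 - s by ring, show (1:ℝ) - -s = 1 + s by ring] at this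
        rw [show s * 1 = s from mul_one s] at *
        linarith
    apply (div_le_div_iff_of_pos_right (by positivity : (0:ℝ) < 4 * Real.log 2)).2
    linarith
  · unfold F
    rw [Hm_eq_Hp, hHp1]
    norm_num
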